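/- Let V(x) = Σ_{i=1}^n V_i(x_i) where each V_i : [0,1] → ℝ is strictly convex and continuous. Then the choice model q(μ) = argmax_{x ∈ Δ_{n−1}} { μᵀx − V(x) } is well-defined (the maximizer exists and is unique for every μ) and substitutable: for all i ≠ j, all μ ∈ ℝⁿ, and all t > 0, q_j(μ + t·e_i) ≤ q_j(μ). -/

import Mathlib

open scoped BigOperators
open MeasureTheory

noncomputable section

/-- The simplex Δ_{n-1} in ℝⁿ. -/
def choiceSimplex (n : ℕ) : Set (Fin n → ℝ) :=
  {x | (∀ i, 0 ≤ x i) ∧ ∑ i, x i = 1}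

/-- A choice welfare function: monotone, translation invariant, convex. -/
def IsCWF {n : ℕ} (w : (Fin n → ℝ) → ℝ) : Prop :=
  (∀ μ₁ μ₂ : Fin n → ℝ, μ₂ ≤ μ₁ → w μ₂ ≤ w μ₁) ∧
  (∀ (μ : Fin n → ℝ) (t : ℝ), w (μ + fun _ => t) = w μ + t) ∧
  ConvexOn ℝ Set.univ w



lemma aux_coord_mem {n : ℕ} {x : Fin n → ℝ} (hx : x ∈ choiceSimplex n) (i : Fin n) :
    x i ∈ Set.Icc (0:ℝ) 1 :=
  ⟨hx.1 i, hx.2 ▸ Finset.single_le_sum (fun j _ => hx.1 j) (Finset.mem_univ i)⟩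

lemma aux_sum_sub_two {n : ℕ} {j k : Fin n} (hjk : j ≠ k) (A B : Fin n → ℝ)
    (h : ∀ m, m ≠ j → m ≠ k → A m = B m) :
    ∑ m, A m - ∑ m, B m = (A j - B j) + (A k - B k) := by
  have h2 : ∑ m, (A m - B m) = ∑ m ∈ ({j, k} : Finset (Fin n)), (A m - B m) := by
    refine (Finset.sum_subset (Finset.subset_univ _) ?_).symm
    intro m _ hm
    simp only [Finset.mem_insert, Finset.mem_singleton, not_or] at hm
    rw [h m hm.1 hm.2, sub_self]
  rw [← Finset.sum_sub_distrib, h2, Finset.sum_pair hjk]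

lemma aux_incr_lt {f : ℝ → ℝ} (hf : StrictConvexOn ℝ (Set.Icc 0 1) f) {a b ε : ℝ}
    (ha : 0 ≤ a) (hb : b ≤ 1) (hε : 0 < ε) (hab : a + ε < b - ε) :
    f (a + ε) - f a < f b - f (b - ε) := by
  have ha' : a ∈ Set.Icc (0:ℝ) 1 := ⟨ha, by linarith⟩
  have hmid : b - ε ∈ Set.Icc (0:ℝ) 1 := ⟨by linarith, by linarith⟩
  have hmid' : a + ε ∈ Set.Icc (0:ℝ) 1 := ⟨by linarith, by linarith⟩
  have hb' : b ∈ Set.Icc (0:ℝ) 1 := ⟨by linarith, hb⟩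
  have s1 := hf.slope_strict_mono_adjacent ha' hmid (by linarith : a < a + ε) hab
  have s2 := hf.slope_strict_mono_adjacent hmid' hb' hab (by linarith : b - ε < b)
  have e1 : a + ε - a = ε := by ring
  have e2 : b - (b - ε) = ε := by ring
  rw [e1] at s1
  rw [e2] at s2
  have := s1.trans s2
  calc f (a + ε) - f a = ((f (a + ε) - f a) / ε) * ε := by field_simp
    _ < ((f b - f (b - ε)) / ε) * ε := mul_lt_mul_of_pos_right this hε
    _ = f b - f (b - ε) := by field_simp


theorem stmt_16 (n : ℕ) (hn : 1 ≤ n) (V : Fin n → ℝ → ℝ)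
    (hconv : ∀ i, StrictConvexOn ℝ (Set.Icc (0 : ℝ) 1) (V i))
    (hcont : ∀ i, ContinuousOn (V i) (Set.Icc (0 : ℝ) 1)) :
    (∀ μ : Fin n → ℝ, ∃! x : Fin n → ℝ, x ∈ choiceSimplex n ∧
      ∀ y ∈ choiceSimplex n,
        ∑ i, μ i * y i - ∑ i, V i (y i) ≤ ∑ i, μ i * x i - ∑ i, V i (x i)) ∧
    (∀ q : (Fin n → ℝ) → Fin n → ℝ,
      (∀ μ : Fin n → ℝ, q μ ∈ choiceSimplex n ∧
        ∀ y ∈ choiceSimplex n,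
          ∑ i, μ i * y i - ∑ i, V i (y i) ≤ ∑ i, μ i * q μ i - ∑ i, V i (q μ i)) →
      ∀ i j : Fin n, i ≠ j → ∀ (μ : Fin n → ℝ) (t : ℝ), 0 < t →
        q (μ + t • (Pi.single i 1 : Fin n → ℝ)) j ≤ q μ j) := by
  constructor
  · intro μ
    -- existence
    have hcompact : IsCompact (choiceSimplex n) := isCompact_stdSimplex ℝ (Fin n)
    have hne : (choiceSimplex n).Nonempty := by
      refine ⟨fun _ => (n : ℝ)⁻¹, fun i => by positivity, ?_⟩
      have hn0 : (n : ℝ) ≠ 0 := Nat.cast_ne_zero.mpr (by omega)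
      simp [Finset.sum_const, mul_comm]
      field_simp
    have hcts : ContinuousOn (fun x : Fin n → ℝ => ∑ i, μ i * x i - ∑ i, V i (x i))
        (choiceSimplex n) := by
      apply ContinuousOn.sub
      · have hc : Continuous fun x : Fin n → ℝ => ∑ i, μ i * x i := by
          apply continuous_finset_sum
          exact fun i _ => continuous_const.mul (continuous_apply i)
        exact hc.continuousOn
      · apply continuousOn_finset_sum
        intro i _
        exact (hcont i).comp (continuous_apply i).continuousOn
          (fun x hx => aux_coord_mem hx i)
    obtain ⟨x, hxmem, hxmax⟩ := hcompact.exists_isMaxOn hne hcts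
    refine ⟨x, ⟨hxmem, fun y hy => hxmax hy⟩, ?_⟩
    rintro x' ⟨hx'mem, hx'max⟩
    by_contra hne'
    obtain ⟨i0, hi0⟩ := Function.ne_iff.mp hne'
    set z : Fin n → ℝ := fun m => (x' m + x m) / 2 with hz
    have hzmem : z ∈ choiceSimplex n := by
      constructor
      · intro m
        have := hx'mem.1 m; have := hxmem.1 m
        simp only [hz]; linarith
      · simp only [hz]
        rw [← Finset.sum_div, Finset.sum_add_distrib, hxmem.2, hx'mem.2]
        norm_num
    have hfx : (∑ i, μ i * x' i - ∑ i, V i (x' i)) = (∑ i, μ i * x i - ∑ i, V i (x i)) :=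
      le_antisymm (hxmax hx'mem) (hx'max x hxmem)
    have hVle : ∀ m : Fin n, V m (z m) ≤ (V m (x' m) + V m (x m)) / 2 := by
      intro m
      have := (hconv m).convexOn.2 (aux_coord_mem hx'mem m) (aux_coord_mem hxmem m)
        (by norm_num : (0:ℝ) ≤ 1/2) (by norm_num : (0:ℝ) ≤ 1/2) (by norm_num)
      simp only [smul_eq_mul] at this
      calc V m (z m) = V m ((1:ℝ)/2 * x' m + 1/2 * x m) := by rw [hz]; ring_nf
        _ ≤ 1/2 * V m (x' m) + 1/2 * V m (x m) := this
        _ = (V m (x' m) + V m (x m)) / 2 := by ring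
    have hVlt : V i0 (z i0) < (V i0 (x' i0) + V i0 (x i0)) / 2 := by
      have := (hconv i0).2 (aux_coord_mem hx'mem i0) (aux_coord_mem hxmem i0) hi0
        (by norm_num : (0:ℝ) < 1/2) (by norm_num : (0:ℝ) < 1/2) (by norm_num)
      simp only [smul_eq_mul] at this
      calc V i0 (z i0) = V i0 ((1:ℝ)/2 * x' i0 + 1/2 * x i0) := by rw [hz]; ring_nf
        _ < 1/2 * V i0 (x' i0) + 1/2 * V i0 (x i0) := this
        _ = (V i0 (x' i0) + V i0 (x i0)) / 2 := by ring
    have hVsum : ∑ m, V m (z m) < ∑ m, (V m (x' m) + V m (x m)) / 2 :=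
      Finset.sum_lt_sum (fun m _ => hVle m) ⟨i0, Finset.mem_univ i0, hVlt⟩
    have hVsplit : ∑ m, (V m (x' m) + V m (x m)) / 2
        = (∑ m, V m (x' m) + ∑ m, V m (x m)) / 2 := by
      rw [← Finset.sum_div, Finset.sum_add_distrib]
    have hlin : ∑ m, μ m * z m = (∑ m, μ m * x' m + ∑ m, μ m * x m) / 2 := by
      rw [← Finset.sum_add_distrib, Finset.sum_div]
      refine Finset.sum_congr rfl fun m _ => ?_
      simp only [hz]; ring
    have hcontra := hxmax hzmem
    simp only [Set.mem_setOf_eq] at hcontra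
    linarith [hVsum, hcontra, hfx, hlin, hVsplit]
  · intro q hq i j hij μ t ht
    by_contra hcon
    push_neg at hcon
    set μ' : Fin n → ℝ := μ + t • (Pi.single i 1 : Fin n → ℝ) with hμ'
    set x : Fin n → ℝ := q μ with hx
    set x' : Fin n → ℝ := q μ' with hx'
    have hxmem : x ∈ choiceSimplex n := (hq μ).1
    have hx'mem : x' ∈ choiceSimplex n := (hq μ').1
    -- find k with x' k < x k
    have hk : ∃ k, x' k < x k := by
      by_contra hk
      push_neg at hk
      have : ∑ m, x m < ∑ m, x' m :=
        Finset.sum_lt_sum (fun m _ => hk m) ⟨j, Finset.mem_univ j, hcon⟩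
      rw [hxmem.2, hx'mem.2] at this
      exact lt_irrefl _ this
    obtain ⟨k, hklt⟩ := hk
    have hkj : k ≠ j := by
      rintro rfl
      exact absurd hcon (not_lt.mpr hklt.le)
    set d1 : ℝ := x' j - x j with hd1
    set d2 : ℝ := x k - x' k with hd2
    have hd1pos : 0 < d1 := by simp [hd1]; linarith
    have hd2pos : 0 < d2 := by simp [hd2]; linarith
    set ε : ℝ := min d1 d2 / 3 with hε
    have hεpos : 0 < ε := by positivity
    have hε1 : 3 * ε ≤ d1 := by
      have : min d1 d2 ≤ d1 := min_le_left _ _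
      simp only [hε]; linarith
    have hε2 : 3 * ε ≤ d2 := by
      have : min d1 d2 ≤ d2 := min_le_right _ _
      simp only [hε]; linarith
    -- perturbed points
    set y : Fin n → ℝ := fun m => if m = j then x j + ε else if m = k then x k - ε else x m with hy
    set y' : Fin n → ℝ := fun m => if m = j then x' j - ε else if m = k then x' k + ε else x' m with hy'
    have hyj : y j = x j + ε := by simp [hy]
    have hyk : y k = x k - ε := by simp [hy, hkj]
    have hy'j : y' j = x' j - ε := by simp [hy']
    have hy'k : y' k = x' k + ε := by simp [hy', hkj]
    have hyother : ∀ m, m ≠ j → m ≠ k → y m = x m := fun m h1 h2 => by simp [hy, h1, h2]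
    have hy'other : ∀ m, m ≠ j → m ≠ k → y' m = x' m := fun m h1 h2 => by simp [hy', h1, h2]
    have hxk1 : x k ≤ 1 := (aux_coord_mem hxmem k).2
    have hx'j1 : x' j ≤ 1 := (aux_coord_mem hx'mem j).2
    have hymem : y ∈ choiceSimplex n := by
      constructor
      · intro m
        by_cases h1 : m = j
        · subst h1; rw [hyj]; have := hxmem.1 m; linarith
        by_cases h2 : m = k
        · subst h2; rw [hyk]; have := hx'mem.1 m; simp only [hd2] at hε2; linarith
        · rw [hyother m h1 h2]; exact hxmem.1 m
      · have hs : ∑ m, y m - ∑ m, x m = (y j - x j) + (y k - x k) :=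
          aux_sum_sub_two (Ne.symm hkj) y x hyother
        rw [hyj, hyk] at hs
        have : ∑ m, y m = ∑ m, x m := by linarith
        rw [this, hxmem.2]
    have hy'mem : y' ∈ choiceSimplex n := by
      constructor
      · intro m
        by_cases h1 : m = j
        · subst h1; rw [hy'j]; have := hxmem.1 m; simp only [hd1] at hε1; linarith
        by_cases h2 : m = k
        · subst h2; rw [hy'k]; have := hx'mem.1 m; linarith
        · rw [hy'other m h1 h2]; exact hx'mem.1 m
      · have hs : ∑ m, y' m - ∑ m, x' m = (y' j - x' j) + (y' k - x' k) :=
          aux_sum_sub_two (Ne.symm hkj) y' x' hy'other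
        rw [hy'j, hy'k] at hs
        have : ∑ m, y' m = ∑ m, x' m := by linarith
        rw [this, hx'mem.2]
    -- optimality inequalities
    have I1 := (hq μ).2 y hymem
    have I2 := (hq μ').2 y' hy'mem
    -- expand sums
    have L1 : ∑ m, μ m * y m - ∑ m, μ m * x m = μ j * ε - μ k * ε := by
      have := aux_sum_sub_two (Ne.symm hkj) (fun m => μ m * y m) (fun m => μ m * x m)
        (fun m h1 h2 => by simp only [hyother m h1 h2])
      rw [hyj, hyk] at this
      rw [this]; ring
    have W1 : ∑ m, V m (y m) - ∑ m, V m (x m)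
        = (V j (x j + ε) - V j (x j)) + (V k (x k - ε) - V k (x k)) := by
      have := aux_sum_sub_two (Ne.symm hkj) (fun m => V m (y m)) (fun m => V m (x m))
        (fun m h1 h2 => by simp only [hyother m h1 h2])
      rw [hyj, hyk] at this
      exact this
    have L2 : ∑ m, μ' m * y' m - ∑ m, μ' m * x' m = μ' k * ε - μ' j * ε := by
      have := aux_sum_sub_two (Ne.symm hkj) (fun m => μ' m * y' m) (fun m => μ' m * x' m)
        (fun m h1 h2 => by simp only [hy'other m h1 h2])
      rw [hy'j, hy'k] at this
      rw [this]; ring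
    have W2 : ∑ m, V m (y' m) - ∑ m, V m (x' m)
        = (V j (x' j - ε) - V j (x' j)) + (V k (x' k + ε) - V k (x' k)) := by
      have := aux_sum_sub_two (Ne.symm hkj) (fun m => V m (y' m)) (fun m => V m (x' m))
        (fun m h1 h2 => by simp only [hy'other m h1 h2])
      rw [hy'j, hy'k] at this
      exact this
    -- μ' values
    have hμ'j : μ' j = μ j := by
      simp [hμ', Pi.single_eq_of_ne (Ne.symm hij)]
    have hμ'k : μ k ≤ μ' k := by
      simp only [hμ', Pi.add_apply, Pi.smul_apply, smul_eq_mul]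
      by_cases h : k = i
      · subst h; simp; positivity
      · simp [Pi.single_eq_of_ne h]
    -- strict convexity inequalities
    have Sk : V k (x' k + ε) - V k (x' k) < V k (x k) - V k (x k - ε) :=
      aux_incr_lt (hconv k) (hx'mem.1 k) hxk1 hεpos (by simp only [hd2] at hε2; linarith)
    have Sj : V j (x j + ε) - V j (x j) < V j (x' j) - V j (x' j - ε) :=
      aux_incr_lt (hconv j) (hxmem.1 j) hx'j1 hεpos (by simp only [hd1] at hε1; linarith)
    -- combine
    have A1 : μ j * ε - μ k * ε ≤ (V j (x j + ε) - V j (x j)) + (V k (x k - ε) - V k (x k)) := by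
      linarith [I1, L1, W1]
    have A2 : μ' k * ε - μ' j * ε ≤ (V j (x' j - ε) - V j (x' j)) + (V k (x' k + ε) - V k (x' k)) := by
      linarith [I2, L2, W2]
    have hμε : μ k * ε - μ j * ε ≤ μ' k * ε - μ' j * ε := by
      rw [hμ'j]
      have := mul_le_mul_of_nonneg_right hμ'k hεpos.le
      linarith
    linarith [A1, A2, hμε, Sk, Sj]
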